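/- Let K be a metric space, f : K → ℝ^{a+b} continuous, written f = f₁ ⊕ f₂ with f₁ : K → ℝ^a and f₂ : K → ℝ^b. Suppose there is δ > 0 such that f₁ is injective on every ball of radius δ, and there is μ > 0 such that |f(x) − f(y)| > μ whenever d(x,y) ≥ δ. If g₂ : K → ℝ^b satisfies |f₂(x) − g₂(x)| < μ/3 for all x, then f₁ ⊕ g₂ is injective. -/

import Mathlib

/-- Perturbation preserving injectivity: if `f = f₁ ⊕ f₂` is continuous, `f₁` is
injective on every ball of radius `δ`, the images under `f` of `δ`-separated
points are `μ`-separated, and `g₂` is a `μ/3`-approximation of `f₂`, then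
`f₁ ⊕ g₂` is injective. -/
theorem concat_perturbation_injective (a b : ℕ) (K : Type*) [MetricSpace K]
    (f : K → EuclideanSpace ℝ (Fin (a + b)))
    (hf : Continuous f)
    (δ μ : ℝ) (hδ : 0 < δ) (hμ : 0 < μ)
    (hloc : ∀ x y : K, dist x y < δ →
      (fun i : Fin a => f x (Fin.castAdd b i)) = (fun i : Fin a => f y (Fin.castAdd b i)) →
      x = y)
    (hsep : ∀ x y : K, δ ≤ dist x y → μ < ‖f x - f y‖)
    (g₂ : K → EuclideanSpace ℝ (Fin b))
    (happrox : ∀ x : K,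
      ‖(show EuclideanSpace ℝ (Fin b) from WithLp.toLp 2 (fun i : Fin b => f x (Fin.natAdd a i))) - g₂ x‖
        < μ / 3) :
    Function.Injective (fun x : K =>
      ((show EuclideanSpace ℝ (Fin a) from WithLp.toLp 2 (fun i : Fin a => f x (Fin.castAdd b i))),
        g₂ x)) := by
  intro x y hxy
  simp only [Prod.mk.injEq] at hxy
  obtain ⟨h1, h2⟩ := hxy
  by_cases hd : dist x y < δ
  · exact hloc x y hd (congrArg WithLp.ofLp h1)
  · exfalso
    push_neg at hd
    have hμ' := hsep x y hd
    set v₂x : EuclideanSpace ℝ (Fin b) := WithLp.toLp 2 (fun i : Fin b => f x (Fin.natAdd a i)) with hv2x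
    set v₂y : EuclideanSpace ℝ (Fin b) := WithLp.toLp 2 (fun i : Fin b => f y (Fin.natAdd a i)) with hv2y
    have hnorm : ‖f x - f y‖ = ‖v₂x - v₂y‖ := by
      rw [EuclideanSpace.norm_eq, EuclideanSpace.norm_eq]
      congr 1
      rw [Fin.sum_univ_add]
      have hz : ∀ i : Fin a, (f x - f y) (Fin.castAdd b i) = 0 := by
        intro i
        have := congrFun (congrArg WithLp.ofLp h1) i
        simp only [PiLp.sub_apply]
        simpa [sub_eq_zero] using this
      simp only [hz]
      simp [PiLp.sub_apply, hv2x, hv2y]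
    have htri : ‖v₂x - v₂y‖ ≤ ‖v₂x - g₂ x‖ + ‖v₂y - g₂ y‖ := by
      calc ‖v₂x - v₂y‖ = ‖(v₂x - g₂ x) - (v₂y - g₂ y)‖ := by rw [h2, sub_sub_sub_cancel_right]
        _ ≤ ‖v₂x - g₂ x‖ + ‖v₂y - g₂ y‖ := norm_sub_le _ _
    have := (happrox x).trans_le (le_of_eq rfl)
    have h3 := happrox x
    have h4 := happrox y
    nlinarith [norm_nonneg (v₂x - g₂ x)]
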